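/- Let f : ℝ → ℝ be nondecreasing and suppose a < b with f(a) < f(b). Then there exists x ∈ [a, b] that is a point of increase of f. -/
import Mathlib

/-- A point of increase of `f : ℝ → ℝ` is `x` such that
`f z < f y` whenever `z < x` and `y > x`. -/
def PtsOfIncrease (f : ℝ → ℝ) : Set ℝ :=
  {x : ℝ | ∀ z < x, ∀ y, x < y → f z < f y}

/-- If a nondecreasing `f` satisfies `f a < f b` for some `a < b`, then
there is a point of increase in `[a, b]`. -/
theorem exists_ptOfIncrease_of_lt (f : ℝ → ℝ) (hf : Monotone f)
    (a b : ℝ) (hab : a < b) (hfab : f a < f b) :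
    ∃ x ∈ Set.Icc a b, x ∈ PtsOfIncrease f := by
  set S : Set ℝ := {t | t ∈ Set.Icc a b ∧ f t ≤ f a} with hS
  have haS : a ∈ S := ⟨⟨le_refl a, hab.le⟩, le_refl _⟩
  have hne : S.Nonempty := ⟨a, haS⟩
  have hbdd : BddAbove S := ⟨b, fun t ht => ht.1.2⟩
  set x := sSup S with hx
  have hax : a ≤ x := le_csSup hbdd haS
  have hxb : x ≤ b := csSup_le hne fun t ht => ht.1.2
  refine ⟨x, ⟨hax, hxb⟩, fun z hz y hy => ?_⟩
  obtain ⟨t, htS, hzt⟩ := exists_lt_of_lt_csSup hne hz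
  have hfy : f a < f y := by
    rcases le_or_gt y b with h | h
    · by_contra hcon
      push_neg at hcon
      exact absurd (le_csSup hbdd ⟨⟨hax.trans hy.le, h⟩, hcon⟩) (not_le.mpr hy)
    · exact hfab.trans_le (hf h.le)
  exact lt_of_le_of_lt ((hf hzt.le).trans htS.2) hfy
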